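/- (von Bahr–Esseen inequality, conditional version used for $p \in (1,2)$) Let $p \in [1,2]$ and let $X_1, \dots, X_n$ be independent real random variables with $\mathbb{E}|X_i|^p < \infty$ and $\mathbb{E}[X_i] = 0$ for each $i$. Then $\mathbb{E}\left|\sum_{i=1}^n X_i\right|^p \le 2 \sum_{i=1}^n \mathbb{E}|X_i|^p$. -/

import Mathlib

open MeasureTheory ProbabilityTheory Finset
open scoped ENNReal NNReal

private lemma rpow_subadd {a b q : ℝ} (ha : 0 ≤ a) (hb : 0 ≤ b) (hq0 : 0 ≤ q) (hq1 : q ≤ 1) :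
    (a + b) ^ q ≤ a ^ q + b ^ q := by
  lift a to ℝ≥0 using ha
  lift b to ℝ≥0 using hb
  have h := NNReal.rpow_add_le_add_rpow a b hq0 hq1
  exact_mod_cast h

private lemma cont_rpow {p : ℝ} (hp : 0 ≤ p) : Continuous fun x : ℝ => x ^ p :=
  continuous_iff_continuousAt.2 fun x => Real.continuousAt_rpow_const x p (Or.inr hp)

private lemma core_region1 {p : ℝ} (hp1 : 1 < p) (hp2 : p ≤ 2) {x : ℝ} (hx : 0 ≤ x) :
    (1 + x) ^ p ≤ 1 + p * x + 2 * x ^ p := by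
  set f : ℝ → ℝ := fun x => 1 + p * x + 2 * x ^ p - (1 + x) ^ p with hf
  have hp0 : (0:ℝ) ≤ p := by linarith
  have hmono : MonotoneOn f (Set.Ici 0) := by
    have hcont : ContinuousOn f (Set.Ici 0) := by
      apply Continuous.continuousOn
      exact ((continuous_const.add (continuous_const.mul continuous_id)).add
        (continuous_const.mul (cont_rpow hp0))).sub
        ((cont_rpow hp0).comp (continuous_const.add continuous_id))
    have hderiv : ∀ y : ℝ, HasDerivAt f (p * 1 + 2 * (p * y ^ (p - 1)) -
        1 * p * (1 + y) ^ (p - 1)) y := by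
      intro y
      have h1 : HasDerivAt (fun y : ℝ => 1 + p * y) (p * 1) y :=
        ((hasDerivAt_id y).const_mul p).const_add 1
      have h2 : HasDerivAt (fun y : ℝ => y ^ p) (p * y ^ (p - 1)) y :=
        Real.hasDerivAt_rpow_const (Or.inr hp1.le)
      have h3 : HasDerivAt (fun y : ℝ => (1 + y) ^ p) (1 * p * (1 + y) ^ (p - 1)) y :=
        ((hasDerivAt_id y).const_add 1).rpow_const (Or.inr hp1.le)
      exact (h1.add (h2.const_mul 2)).sub h3
    apply monotoneOn_of_deriv_nonneg (convex_Ici 0) hcont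
    · intro y hy
      exact ((hderiv y).differentiableAt).differentiableWithinAt
    · intro y hy
      rw [interior_Ici] at hy
      rw [(hderiv y).deriv]
      have hy0 : (0:ℝ) < y := hy
      have hsub : (1 + y) ^ (p - 1) ≤ 1 + y ^ (p - 1) := by
        have h := rpow_subadd (zero_le_one) hy0.le (by linarith : (0:ℝ) ≤ p - 1)
          (by linarith : p - 1 ≤ 1)
        rwa [Real.one_rpow] at h
      have hyq : (0:ℝ) ≤ y ^ (p - 1) := Real.rpow_nonneg hy0.le _
      nlinarith [hp1]
  have h0 : f 0 = 0 := by
    simp [hf, Real.zero_rpow (by linarith : p ≠ 0), Real.one_rpow]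
  have := hmono (Set.self_mem_Ici) hx hx
  rw [h0] at this
  simp only [hf] at this
  linarith

private lemma core_region2 {p : ℝ} (hp1 : 1 < p) (hp2 : p ≤ 2) {x : ℝ} (hx1 : -1 ≤ x)
    (hx0 : x ≤ 0) : (1 + x) ^ p ≤ 1 + p * x + 2 * (-x) ^ p := by
  set f : ℝ → ℝ := fun x => 1 + p * x + 2 * (-x) ^ p - (1 + x) ^ p with hf
  have hp0 : (0:ℝ) ≤ p := by linarith
  have hanti : AntitoneOn f (Set.Icc (-1) 0) := by
    have hcont : ContinuousOn f (Set.Icc (-1) 0) := by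
      apply Continuous.continuousOn
      exact ((continuous_const.add (continuous_const.mul continuous_id)).add
        (continuous_const.mul ((cont_rpow hp0).comp continuous_neg))).sub
        ((cont_rpow hp0).comp (continuous_const.add continuous_id))
    have hderiv : ∀ y : ℝ, HasDerivAt f (p * 1 + 2 * (-1 * p * (-y) ^ (p - 1)) -
        1 * p * (1 + y) ^ (p - 1)) y := by
      intro y
      have h1 : HasDerivAt (fun y : ℝ => 1 + p * y) (p * 1) y :=
        ((hasDerivAt_id y).const_mul p).const_add 1
      have h2 : HasDerivAt (fun y : ℝ => (-y) ^ p) (-1 * p * (-y) ^ (p - 1)) y := by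
        have := ((hasDerivAt_id y).neg).rpow_const (p := p) (Or.inr hp1.le)
        simpa using this
      have h3 : HasDerivAt (fun y : ℝ => (1 + y) ^ p) (1 * p * (1 + y) ^ (p - 1)) y :=
        ((hasDerivAt_id y).const_add 1).rpow_const (Or.inr hp1.le)
      exact (h1.add (h2.const_mul 2)).sub h3
    apply antitoneOn_of_deriv_nonpos (convex_Icc (-1) 0) hcont
    · intro y hy
      exact ((hderiv y).differentiableAt).differentiableWithinAt
    · intro y hy
      rw [interior_Icc] at hy
      rw [(hderiv y).deriv]
      obtain ⟨hya, hyb⟩ := hy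
      have hsub : (1:ℝ) ≤ (-y) ^ (p - 1) + (1 + y) ^ (p - 1) := by
        have h := rpow_subadd (by linarith : (0:ℝ) ≤ -y) (by linarith : (0:ℝ) ≤ 1 + y)
          (by linarith : (0:ℝ) ≤ p - 1) (by linarith : p - 1 ≤ 1)
        have : (-y + (1 + y)) = (1:ℝ) := by ring
        rw [this, Real.one_rpow] at h
        exact h
      have hyq : (0:ℝ) ≤ (-y) ^ (p - 1) := Real.rpow_nonneg (by linarith) _
      nlinarith
  have h0 : f 0 = 0 := by
    simp [hf, Real.zero_rpow (by linarith : p ≠ 0), Real.one_rpow]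
  have := hanti (Set.mem_Icc.2 ⟨hx1, hx0⟩) (Set.mem_Icc.2 ⟨by norm_num, le_refl 0⟩) hx0
  rw [h0] at this
  simp only [hf] at this
  linarith

private lemma core_region3 {p : ℝ} (hp1 : 1 < p) (hp2 : p ≤ 2) {x : ℝ} (hx : x ≤ -1) :
    (-(1 + x)) ^ p ≤ 1 + p * x + 2 * (-x) ^ p := by
  set f : ℝ → ℝ := fun x => 1 + p * x + 2 * (-x) ^ p - (-(1 + x)) ^ p with hf
  have hp0 : (0:ℝ) ≤ p := by linarith
  have hanti : AntitoneOn f (Set.Iic (-1)) := by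
    have hcont : ContinuousOn f (Set.Iic (-1)) := by
      apply Continuous.continuousOn
      exact ((continuous_const.add (continuous_const.mul continuous_id)).add
        (continuous_const.mul ((cont_rpow hp0).comp continuous_neg))).sub
        ((cont_rpow hp0).comp ((continuous_const.add continuous_id).neg))
    have hderiv : ∀ y : ℝ, HasDerivAt f (p * 1 + 2 * (-1 * p * (-y) ^ (p - 1)) -
        -1 * p * (-(1 + y)) ^ (p - 1)) y := by
      intro y
      have h1 : HasDerivAt (fun y : ℝ => 1 + p * y) (p * 1) y :=
        ((hasDerivAt_id y).const_mul p).const_add 1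
      have h2 : HasDerivAt (fun y : ℝ => (-y) ^ p) (-1 * p * (-y) ^ (p - 1)) y := by
        have := ((hasDerivAt_id y).neg).rpow_const (p := p) (Or.inr hp1.le)
        simpa using this
      have h3 : HasDerivAt (fun y : ℝ => (-(1 + y)) ^ p) (-1 * p * (-(1 + y)) ^ (p - 1)) y := by
        have := (((hasDerivAt_id y).const_add 1).neg).rpow_const (p := p) (Or.inr hp1.le)
        simpa using this
      exact (h1.add (h2.const_mul 2)).sub h3
    apply antitoneOn_of_deriv_nonpos (convex_Iic (-1)) hcont
    · intro y hy
      exact ((hderiv y).differentiableAt).differentiableWithinAt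
    · intro y hy
      rw [interior_Iic] at hy
      rw [(hderiv y).deriv]
      have hy1 : y < -1 := hy
      have h1 : (1:ℝ) ≤ (-y) ^ (p - 1) := by
        have := Real.rpow_le_rpow (by norm_num : (0:ℝ) ≤ 1) (by linarith : (1:ℝ) ≤ -y)
          (by linarith : (0:ℝ) ≤ p - 1)
        rwa [Real.one_rpow] at this
      have h2 : (-(1 + y)) ^ (p - 1) ≤ (-y) ^ (p - 1) :=
        Real.rpow_le_rpow (by linarith) (by linarith) (by linarith)
      nlinarith
  have hm1 : f (-1) = 3 - p := by
    simp only [hf]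
    norm_num [Real.zero_rpow (show p ≠ 0 by linarith)]
    ring
  have := hanti (Set.mem_Iic.2 hx) (Set.mem_Iic.2 (le_refl (-1))) hx
  rw [hm1] at this
  simp only [hf] at this
  linarith

private lemma core_ineq {p : ℝ} (hp1 : 1 ≤ p) (hp2 : p ≤ 2) (t : ℝ) :
    |1 + t| ^ p ≤ 1 + p * t + 2 * |t| ^ p := by
  rcases eq_or_lt_of_le hp1 with hp | hp
  · subst hp
    simp only [Real.rpow_one]
    have h1 : |1 + t| ≤ 1 + |t| := by simpa using abs_add_le (1:ℝ) t
    have h2 := neg_abs_le t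
    have h3 := abs_nonneg t
    linarith
  rcases le_or_gt 0 t with ht | ht
  · rw [abs_of_nonneg (by linarith : (0:ℝ) ≤ 1 + t), abs_of_nonneg ht]
    exact core_region1 hp hp2 ht
  rcases le_or_gt (-1) t with ht1 | ht1
  · rw [abs_of_nonneg (by linarith : (0:ℝ) ≤ 1 + t), abs_of_nonpos ht.le]
    exact core_region2 hp hp2 ht1 ht.le
  · rw [abs_of_nonpos (by linarith : 1 + t ≤ 0), abs_of_nonpos ht.le]
    exact core_region3 hp hp2 ht1.le

private lemma core_scaled {p : ℝ} (hp1 : 1 ≤ p) (hp2 : p ≤ 2) (s x : ℝ) :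
    |s + x| ^ p ≤ |s| ^ p + p * Real.sign s * |s| ^ (p - 1) * x + 2 * |x| ^ p := by
  have hp0 : p ≠ 0 := by linarith
  rcases eq_or_ne s 0 with rfl | hs
  · simp [Real.sign_zero, Real.zero_rpow hp0]
    nlinarith [Real.rpow_nonneg (abs_nonneg x) p]
  have hsabs : (0:ℝ) < |s| := abs_pos.2 hs
  have key := core_ineq hp1 hp2 (x / s)
  have hmul := mul_le_mul_of_nonneg_left key (Real.rpow_nonneg (abs_nonneg s) p)
  have e1 : |s| ^ p * |1 + x / s| ^ p = |s + x| ^ p := by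
    rw [← Real.mul_rpow (abs_nonneg s) (abs_nonneg _), ← abs_mul]
    congr 2
    field_simp
  have e2 : |s| ^ p * (x / s) = Real.sign s * |s| ^ (p - 1) * x := by
    have h1 : |s| ^ p = |s| ^ (p - 1) * |s| := by
      nth_rewrite 1 [show p = (p - 1) + 1 by ring]
      rw [Real.rpow_add_one (ne_of_gt hsabs)]
    rw [h1]
    rcases hs.lt_or_gt with hneg | hpos
    · rw [Real.sign_of_neg hneg, abs_of_neg hneg]
      field_simp
    · rw [Real.sign_of_pos hpos, abs_of_pos hpos]
      field_simp
  have e3 : |s| ^ p * |x / s| ^ p = |x| ^ p := by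
    rw [← Real.mul_rpow (abs_nonneg s) (abs_nonneg _), ← abs_mul]
    congr 2
    field_simp
  calc |s + x| ^ p = |s| ^ p * |1 + x / s| ^ p := e1.symm
    _ ≤ |s| ^ p * (1 + p * (x / s) + 2 * |x / s| ^ p) := hmul
    _ = |s| ^ p + p * (|s| ^ p * (x / s)) + 2 * (|s| ^ p * |x / s| ^ p) := by ring
    _ = |s| ^ p + p * Real.sign s * |s| ^ (p - 1) * x + 2 * |x| ^ p := by
        rw [e2, e3]; ring

private lemma measurable_real_sign : Measurable Real.sign := by
  have h : Real.sign = fun r : ℝ => if r < 0 then (-1:ℝ) else if 0 < r then 1 else 0 :=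
    funext fun r => rfl
  rw [h]
  exact Measurable.ite (measurableSet_lt measurable_id measurable_const) measurable_const
    (Measurable.ite (measurableSet_lt measurable_const measurable_id) measurable_const
      measurable_const)

private lemma abs_real_sign (s : ℝ) : |Real.sign s| ≤ 1 := by
  rcases lt_trichotomy s 0 with h | h | h
  · simp [Real.sign_of_neg h]
  · simp [h, Real.sign_zero]
  · simp [Real.sign_of_pos h]

private lemma memLp_abs_rpow {Ω : Type*} [MeasurableSpace Ω] {P : Measure Ω}
    {p : ℝ} (hp1 : 1 ≤ p) {f : Ω → ℝ} (hf : MemLp f (ENNReal.ofReal p) P) :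
    Integrable (fun ω => |f ω| ^ p) P := by
  have h := hf.integrable_norm_rpow (by simp [ENNReal.ofReal_eq_zero]; linarith) (by simp)
  simpa [ENNReal.toReal_ofReal (by linarith : (0:ℝ) ≤ p), Real.norm_eq_abs] using h

private lemma step_ineq {Ω : Type*} [MeasurableSpace Ω] (P : Measure Ω) [IsProbabilityMeasure P]
    {p : ℝ} (hp1 : 1 ≤ p) (hp2 : p ≤ 2) {S X : Ω → ℝ}
    (hmS : Measurable S) (hmX : Measurable X)
    (hS : MemLp S (ENNReal.ofReal p) P) (hX : MemLp X (ENNReal.ofReal p) P)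
    (hmean : ∫ ω, X ω ∂P = 0) (hindep : IndepFun S X P) :
    ∫ ω, |S ω + X ω| ^ p ∂P ≤ ∫ ω, |S ω| ^ p ∂P + 2 * ∫ ω, |X ω| ^ p ∂P := by
  have hp0 : (0:ℝ) < p := by linarith
  set g : ℝ → ℝ := fun s => p * Real.sign s * |s| ^ (p - 1) with hg
  have hmg : Measurable g := by
    have h1 : Measurable fun s : ℝ => |s| ^ (p - 1) :=
      (cont_rpow (by linarith : (0:ℝ) ≤ p - 1)).measurable.comp measurable_abs
    exact (measurable_const.mul measurable_real_sign).mul h1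
  have intSp : Integrable (fun ω => |S ω| ^ p) P := memLp_abs_rpow hp1 hS
  have intXp : Integrable (fun ω => |X ω| ^ p) P := memLp_abs_rpow hp1 hX
  have intX : Integrable X P := hX.integrable (ENNReal.one_le_ofReal.mpr hp1)
  have intG : Integrable (g ∘ S) P := by
    apply Integrable.mono' (((integrable_const (1:ℝ)).add intSp).const_mul p)
      ((hmg.comp hmS).aestronglyMeasurable)
    filter_upwards with ω
    have ha : (0:ℝ) ≤ |S ω| := abs_nonneg _
    have hb : |S ω| ^ (p - 1) ≤ 1 + |S ω| ^ p := by
      rcases le_or_gt (|S ω|) 1 with h | h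
      · have := Real.rpow_le_one ha h (by linarith : (0:ℝ) ≤ p - 1)
        have := Real.rpow_nonneg ha p
        linarith
      · have := Real.rpow_le_rpow_of_exponent_le h.le (by linarith : p - 1 ≤ p)
        have := Real.rpow_nonneg ha (p - 1)
        linarith
    have hbn : (0:ℝ) ≤ |S ω| ^ (p - 1) := Real.rpow_nonneg ha _
    calc ‖(g ∘ S) ω‖ = |p * Real.sign (S ω) * |S ω| ^ (p - 1)| := rfl
      _ = p * |Real.sign (S ω)| * |S ω| ^ (p - 1) := by
          rw [abs_mul, abs_mul, abs_of_nonneg hp0.le, abs_of_nonneg hbn]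
      _ ≤ p * 1 * (1 + |S ω| ^ p) := by
          apply mul_le_mul
          · exact mul_le_mul_of_nonneg_left (abs_real_sign _) hp0.le
          · exact hb
          · exact hbn
          · positivity
      _ = p * (1 + |S ω| ^ p) := by ring
  have hGX : IndepFun (g ∘ S) X P := hindep.comp hmg measurable_id
  have intGX : Integrable ((g ∘ S) * X) P := hGX.integrable_mul intG intX
  have intGX' : Integrable (fun ω => (g ∘ S) ω * X ω) P := intGX
  have eGX : ∫ ω, (g ∘ S) ω * X ω ∂P = 0 := by
    have h := hGX.integral_mul_eq_mul_integral intG.aestronglyMeasurable intX.aestronglyMeasurable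
    have h2 : ∫ ω, (g ∘ S) ω * X ω ∂P = integral P ((g ∘ S) * X) := rfl
    rw [h2, h, hmean, mul_zero]
  have hrhs : Integrable (fun ω => |S ω| ^ p + (g ∘ S) ω * X ω + 2 * |X ω| ^ p) P :=
    (intSp.add intGX).add (intXp.const_mul 2)
  have hmono := integral_mono_of_nonneg
    (f := fun ω => |S ω + X ω| ^ p)
    (g := fun ω => |S ω| ^ p + (g ∘ S) ω * X ω + 2 * |X ω| ^ p)
    (Filter.Eventually.of_forall fun ω => Real.rpow_nonneg (abs_nonneg _) _) hrhs
    (Filter.Eventually.of_forall fun ω => by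
      have := core_scaled hp1 hp2 (S ω) (X ω)
      simp only [Function.comp_apply, hg]
      linarith)
  calc ∫ ω, |S ω + X ω| ^ p ∂P
      ≤ ∫ ω, (|S ω| ^ p + (g ∘ S) ω * X ω + 2 * |X ω| ^ p) ∂P := hmono
    _ = ∫ ω, |S ω| ^ p ∂P + ∫ ω, (g ∘ S) ω * X ω ∂P + 2 * ∫ ω, |X ω| ^ p ∂P := by
        have hA : Integrable (fun ω => |S ω| ^ p + (g ∘ S) ω * X ω) P := intSp.add intGX'
        have hB : Integrable (fun ω => 2 * |X ω| ^ p) P := intXp.const_mul 2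
        rw [integral_add hA hB, integral_add intSp intGX', integral_const_mul 2 _]
    _ = ∫ ω, |S ω| ^ p ∂P + 2 * ∫ ω, |X ω| ^ p ∂P := by rw [eGX]; ring

private lemma iIndepFun_congr_ae {Ω ι : Type*} [MeasurableSpace Ω] {P : Measure Ω}
    {X Y : ι → Ω → ℝ} (h : iIndepFun X P)
    (heq : ∀ i, X i =ᵐ[P] Y i) : iIndepFun Y P := by
  rw [iIndepFun_iff_measure_inter_preimage_eq_mul] at h ⊢
  intro S sets hmeas
  have hae : ∀ i, i ∈ S → (X i ⁻¹' sets i : Set Ω) =ᵐ[P] (Y i ⁻¹' sets i : Set Ω) := by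
    intro i _
    apply Filter.eventuallyEq_set.2
    filter_upwards [heq i] with ω hω
    simp [Set.mem_preimage, hω]
  have hinter : (⋂ i ∈ S, X i ⁻¹' sets i : Set Ω) =ᵐ[P] (⋂ i ∈ S, Y i ⁻¹' sets i : Set Ω) := by
    apply Filter.eventuallyEq_set.2
    have hall : ∀ᵐ ω ∂P, ∀ i ∈ S, X i ω = Y i ω :=
      (Filter.eventually_all_finset S).2 fun i _ => heq i
    filter_upwards [hall] with ω hω
    simp only [Set.mem_iInter, Set.mem_preimage]
    constructor
    · intro hmem i hi
      rw [← hω i hi]; exact hmem i hi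
    · intro hmem i hi
      rw [hω i hi]; exact hmem i hi
  rw [← measure_congr hinter, h S hmeas]
  exact Finset.prod_congr rfl fun i hi => measure_congr (hae i hi)

/-- The von Bahr–Esseen inequality: for independent centred random variables with finite
`p`-th moments, `p ∈ [1,2]`, `E|∑ Xᵢ|^p ≤ 2 ∑ E|Xᵢ|^p`. -/
theorem vonBahr_Esseen {Ω : Type*} [MeasurableSpace Ω] (P : Measure Ω)
    [IsProbabilityMeasure P] (p : ℝ) (hp1 : 1 ≤ p) (hp2 : p ≤ 2)
    (n : ℕ) (X : Fin n → Ω → ℝ)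
    (hindep : iIndepFun X P)
    (hLp : ∀ i, MemLp (X i) (ENNReal.ofReal p) P)
    (hmean : ∀ i, ∫ ω, X i ω ∂P = 0) :
    ∫ ω, |∑ i, X i ω| ^ p ∂P ≤ 2 * ∑ i, ∫ ω, |X i ω| ^ p ∂P := by
  set Y : Fin n → Ω → ℝ := fun i => (hLp i).1.mk (X i) with hYdef
  have hYm : ∀ i, Measurable (Y i) := fun i => (hLp i).1.stronglyMeasurable_mk.measurable
  have heq : ∀ i, X i =ᵐ[P] Y i := fun i => (hLp i).1.ae_eq_mk
  have hYLp : ∀ i, MemLp (Y i) (ENNReal.ofReal p) P := fun i => (hLp i).ae_eq (heq i)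
  have hYmean : ∀ i, ∫ ω, Y i ω ∂P = 0 := fun i => by
    rw [← integral_congr_ae (heq i)]; exact hmean i
  have hYindep : iIndepFun Y P := iIndepFun_congr_ae hindep heq
  have hsum : ∫ ω, |∑ i, X i ω| ^ p ∂P = ∫ ω, |∑ i, Y i ω| ^ p ∂P := by
    apply integral_congr_ae
    have hall : ∀ᵐ ω ∂P, ∀ i : Fin n, X i ω = Y i ω := ae_all_iff.2 heq
    filter_upwards [hall] with ω hω
    rw [Finset.sum_congr rfl fun i _ => hω i]
  have hterm : ∀ i, ∫ ω, |X i ω| ^ p ∂P = ∫ ω, |Y i ω| ^ p ∂P := fun i =>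
    integral_congr_ae ((heq i).mono fun ω h => by dsimp only; rw [h])
  rw [hsum, Finset.sum_congr rfl fun i _ => hterm i]
  have key : ∀ s : Finset (Fin n),
      ∫ ω, |∑ i ∈ s, Y i ω| ^ p ∂P ≤ 2 * ∑ i ∈ s, ∫ ω, |Y i ω| ^ p ∂P := by
    intro s
    induction s using Finset.cons_induction with
    | empty => simp [Real.zero_rpow (show p ≠ 0 by linarith)]
    | cons i s hi ih =>
      have hSm : Measurable (fun ω => ∑ j ∈ s, Y j ω) :=
        Finset.measurable_sum s fun j _ => hYm j
      have hSLp : MemLp (fun ω => ∑ j ∈ s, Y j ω) (ENNReal.ofReal p) P := by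
        have h := memLp_finsetSum' s (fun j (_ : j ∈ s) => hYLp j)
        have e : (∑ j ∈ s, Y j) = fun ω => ∑ j ∈ s, Y j ω :=
          funext fun ω => Finset.sum_apply ω s Y
        rwa [e] at h
      have hindepSX : IndepFun (fun ω => ∑ j ∈ s, Y j ω) (Y i) P := by
        have h := hYindep.indepFun_finsetSum_of_notMem hYm hi
        have e : (∑ j ∈ s, Y j) = fun ω => ∑ j ∈ s, Y j ω :=
          funext fun ω => Finset.sum_apply ω s Y
        rwa [e] at h
      have hstep := step_ineq P hp1 hp2 hSm (hYm i) hSLp (hYLp i) (hYmean i) hindepSX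
      rw [Finset.sum_cons]
      calc ∫ ω, |∑ j ∈ Finset.cons i s hi, Y j ω| ^ p ∂P
          = ∫ ω, |(∑ j ∈ s, Y j ω) + Y i ω| ^ p ∂P := by
            apply integral_congr_ae
            filter_upwards with ω
            rw [Finset.sum_cons, add_comm]
        _ ≤ ∫ ω, |∑ j ∈ s, Y j ω| ^ p ∂P + 2 * ∫ ω, |Y i ω| ^ p ∂P := hstep
        _ ≤ 2 * ∑ j ∈ s, ∫ ω, |Y j ω| ^ p ∂P + 2 * ∫ ω, |Y i ω| ^ p ∂P := by linarith
        _ = 2 * (∫ ω, |Y i ω| ^ p ∂P + ∑ j ∈ s, ∫ ω, |Y j ω| ^ p ∂P) := by ring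
  exact key Finset.univ
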